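/- Let C be a path category with homotopy Π-types, f: Y → X a fibration in C, p: B → A a fibration in the slice path category C(Y) (so A → Y and p are fibrations), and Π_f(A) a homotopy Π-type of A along f in C(X). Then there exists a homotopy Π-type Π_f(B) in C(X) together with a fibration Π_f(p): Π_f(B) → Π_f(A) in C(X) such that: (1) the square with horizontal arrows the counits ε: f*Π_f(B) → B and ε: f*Π_f(A) → A and vertical arrows f*Π_f(p) and p commutes in C(Y); and (2) for each object C of C(X), the induced square of hom-sets Ho(C(X))(C, Π_f(B)) → Ho(C(Y))(f*C, B), Ho(C(X))(C, Π_f(A)) → Ho(C(Y))(f*C, A) is a pullback of sets. -/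

import Mathlib

namespace EffPaper

open CategoryTheory

universe v u

/-! ### Path categories (Van den Berg–Moerdijk style), abstractly.

A `PathStruct` on a category is a pair of classes of maps: fibrations and equivalences.
`IsPathCategory` expresses the seven axioms of a path category. -/

structure PathStruct (C : Type u) [Category.{v} C] where
  Fib : ∀ ⦃X Y : C⦄, (X ⟶ Y) → Prop
  Eqv : ∀ ⦃X Y : C⦄, (X ⟶ Y) → Prop

section PathCatDefs

variable {C : Type u} [Category.{v} C]

/-- `T` is a terminal object. -/
def IsTerminalObj (T : C) : Prop := ∀ Z : C, ∃ f : Z ⟶ T, ∀ g : Z ⟶ T, g = f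

/-- The square with projections `p₁, p₂` is a pullback of the cospan `f, g`. -/
def IsPB {P X Y Z : C} (p₁ : P ⟶ X) (p₂ : P ⟶ Y) (f : X ⟶ Z) (g : Y ⟶ Z) : Prop :=
  p₁ ≫ f = p₂ ≫ g ∧ ∀ (Q : C) (q₁ : Q ⟶ X) (q₂ : Q ⟶ Y), q₁ ≫ f = q₂ ≫ g →
    ∃! h : Q ⟶ P, h ≫ p₁ = q₁ ∧ h ≫ p₂ = q₂

/-- `p₁, p₂` exhibit their common domain as a binary product of `X` and `Y`. -/
def IsBinProd {P X Y : C} (p₁ : P ⟶ X) (p₂ : P ⟶ Y) : Prop :=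
  ∀ (Q : C) (q₁ : Q ⟶ X) (q₂ : Q ⟶ Y), ∃! h : Q ⟶ P, h ≫ p₁ = q₁ ∧ h ≫ p₂ = q₂

variable (S : PathStruct C)

/-- `X → PX → X × X` is a path object for `X`: the first map is an equivalence, the
second (the pairing of `s` and `t` into a binary product `X × X`) is a fibration,
and the composite is the diagonal. -/
def IsPathObj {X PX : C} (r : X ⟶ PX) (s t : PX ⟶ X) : Prop :=
  S.Eqv r ∧ r ≫ s = 𝟙 X ∧ r ≫ t = 𝟙 X ∧
  ∃ (W : C) (π₁ π₂ : W ⟶ X) (h : PX ⟶ W),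
    IsBinProd π₁ π₂ ∧ h ≫ π₁ = s ∧ h ≫ π₂ = t ∧ S.Fib h

/-- A path object for `p : X ⟶ I` in the slice path category `C(I)`:
a factorisation of the fibrewise diagonal `X ⟶ X ×_I X` as an equivalence `r`
followed by a fibration. -/
def IsRelPathObj {X I PX : C} (p : X ⟶ I) (r : X ⟶ PX) (s t : PX ⟶ X) : Prop :=
  S.Eqv r ∧ r ≫ s = 𝟙 X ∧ r ≫ t = 𝟙 X ∧ s ≫ p = t ≫ p ∧
  ∃ (W : C) (π₁ π₂ : W ⟶ X) (h : PX ⟶ W),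
    IsPB π₁ π₂ p p ∧ h ≫ π₁ = s ∧ h ≫ π₂ = t ∧ S.Fib h

/-- The seven axioms for a path category. -/
structure IsPathCategory : Prop where
  fib_of_iso : ∀ {X Y : C} (f : X ⟶ Y), IsIso f → S.Fib f
  fib_comp : ∀ {X Y Z : C} (f : X ⟶ Y) (g : Y ⟶ Z), S.Fib f → S.Fib g → S.Fib (f ≫ g)
  terminal : ∃ T : C, IsTerminalObj T ∧ ∀ (X : C) (f : X ⟶ T), S.Fib f
  pullback : ∀ {X Y Z : C} (f : X ⟶ Z) (g : Y ⟶ Z), S.Fib f →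
    ∃ (P : C) (p₁ : P ⟶ X) (p₂ : P ⟶ Y), IsPB p₁ p₂ f g ∧ S.Fib p₂
  eqv_of_iso : ∀ {X Y : C} (f : X ⟶ Y), IsIso f → S.Eqv f
  two_out_of_six : ∀ {X Y Z W : C} (f : X ⟶ Y) (g : Y ⟶ Z) (h : Z ⟶ W),
    S.Eqv (f ≫ g) → S.Eqv (g ≫ h) →
    S.Eqv f ∧ S.Eqv g ∧ S.Eqv h ∧ S.Eqv (f ≫ g ≫ h)
  path_obj : ∀ X : C, ∃ (PX : C) (r : X ⟶ PX) (s t : PX ⟶ X), IsPathObj S r s t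
  triv_fib_pb : ∀ {X Y Z P : C} (f : X ⟶ Z) (g : Y ⟶ Z) (p₁ : P ⟶ X) (p₂ : P ⟶ Y),
    S.Fib f → S.Eqv f → IsPB p₁ p₂ f g → S.Fib p₂ ∧ S.Eqv p₂
  triv_fib_sect : ∀ {X Y : C} (f : X ⟶ Y), S.Fib f → S.Eqv f → ∃ s : Y ⟶ X, s ≫ f = 𝟙 Y

/-- Two parallel maps are homotopic: `(f,g)` factors through some path object. -/
def Homotopic {Z X : C} (f g : Z ⟶ X) : Prop :=
  ∃ (PX : C) (r : X ⟶ PX) (s t : PX ⟶ X), IsPathObj S r s t ∧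
    ∃ H : Z ⟶ PX, H ≫ s = f ∧ H ≫ t = g

/-- `f` and `g` are fibrewise homotopic over the codomain of `p`:
`(f,g)` factors through some path object of `p` in the slice. -/
def FibHomotopic {Z X I : C} (p : X ⟶ I) (f g : Z ⟶ X) : Prop :=
  ∃ (PX : C) (r : X ⟶ PX) (s t : PX ⟶ X), IsRelPathObj S p r s t ∧
    ∃ H : Z ⟶ PX, H ≫ s = f ∧ H ≫ t = g

/-- `IsNTypeFib S n f` says that `f` is a fibration of `(n-2)`-types; so `n = 0`
corresponds to hlevel `-2` (trivial fibrations), `n = 1` to propositions,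
`n = 2` to sets and `n = 3` to groupoids. -/
def IsNTypeFib : ℕ → ∀ ⦃Y X : C⦄, (Y ⟶ X) → Prop
  | 0, _, _, f => S.Fib f ∧ S.Eqv f
  | n+1, Y, _, f => S.Fib f ∧ ∃ (PY W : C) (r : Y ⟶ PY) (s t : PY ⟶ Y)
      (π₁ π₂ : W ⟶ Y) (h : PY ⟶ W),
      IsRelPathObj S f r s t ∧ IsPB π₁ π₂ f f ∧ h ≫ π₁ = s ∧ h ≫ π₂ = t ∧
      IsNTypeFib n h

/-- The (strictly) commutative square with vertical fibrations `g` (left) and `f` (right),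
top `top` and bottom `bot`, is a homotopy pullback: the induced map to the actual
pullback is an equivalence. -/
def IsHomotopyPB {D Cc B A : C} (g : D ⟶ Cc) (top : D ⟶ B) (f : B ⟶ A) (bot : Cc ⟶ A) :
    Prop :=
  g ≫ bot = top ≫ f ∧ ∃ (P : C) (p₁ : P ⟶ Cc) (p₂ : P ⟶ B) (h : D ⟶ P),
    IsPB p₁ p₂ bot f ∧ h ≫ p₁ = g ∧ h ≫ p₂ = top ∧ S.Eqv h

/-- A transport structure on the fibration `p : Y ⟶ X`, relative to the path object
`(PX, r, s, t)` and the pullback `(Q, q₁, q₂)` of `s : PX ⟶ X` along `p`: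
a map `Γ : Y ×_X PX ⟶ Y` with `p ∘ Γ = t ∘ q₂` and `Γ ∘ (1_Y, r ∘ p) ≃_X 1_Y`. -/
def IsTransport {Y X PX Q : C} (p : Y ⟶ X) (r : X ⟶ PX) (s t : PX ⟶ X)
    (q₁ : Q ⟶ Y) (q₂ : Q ⟶ PX) (Γ : Q ⟶ Y) : Prop :=
  Γ ≫ p = q₂ ≫ t ∧
  ∀ j : Y ⟶ Q, j ≫ q₁ = 𝟙 Y → j ≫ q₂ = p ≫ r → FibHomotopic S p (j ≫ Γ) (𝟙 Y)

/-- A fibration `p : Y ⟶ X` is univalent: whenever `f, g : Z ⟶ X` and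
`w : f*p ⟶ g*p` is an equivalence over `Z`, there is a homotopy `H` from `f` to `g`
such that `w` is fibrewise homotopic over `Z` to the map induced by `H` and a
transport structure on `p`. -/
def Univalent {Y X : C} (p : Y ⟶ X) : Prop :=
  ∀ {Z Zf Zg : C} (f g : Z ⟶ X) (a₁ : Zf ⟶ Z) (a₂ : Zf ⟶ Y) (b₁ : Zg ⟶ Z) (b₂ : Zg ⟶ Y),
    IsPB a₁ a₂ f p → IsPB b₁ b₂ g p →
    ∀ w : Zf ⟶ Zg, w ≫ b₁ = a₁ → S.Eqv w →
    ∃ (PX Q : C) (r : X ⟶ PX) (s t : PX ⟶ X) (q₁ : Q ⟶ Y) (q₂ : Q ⟶ PX) (Γ : Q ⟶ Y)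
      (H : Z ⟶ PX) (k : Zf ⟶ Q) (w' : Zf ⟶ Zg),
      IsPathObj S r s t ∧ IsPB q₁ q₂ p s ∧ IsTransport S p r s t q₁ q₂ Γ ∧
      H ≫ s = f ∧ H ≫ t = g ∧
      k ≫ q₁ = a₂ ∧ k ≫ q₂ = a₁ ≫ H ∧
      w' ≫ b₁ = a₁ ∧ w' ≫ b₂ = k ≫ Γ ∧
      FibHomotopic S b₁ w w'

/-- `π : E ⟶ U` is a representation for the class `Small`: it is small, and every
small fibration is a homotopy pullback of it. -/
def IsRepresentation (Small : ∀ ⦃X Y : C⦄, (X ⟶ Y) → Prop) {E U : C} (π : E ⟶ U) : Prop :=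
  Small π ∧ ∀ ⦃B A : C⦄ (f : B ⟶ A), Small f →
    ∃ (c : A ⟶ U) (top : B ⟶ E), IsHomotopyPB S f top π c

/-- `M` is a good lift for the universal property of the homotopy Π-type
`(pE, u₁, u₂, ε)` of `g` along `f`, at the map `h : A ⟶ X` with chosen pullback
`(Ah, v₁, v₂)` of `h` along `f` and `m : f*h ⟶ g` over `Y`. -/
def HPiLiftGood {Y X Z E F A Ah : C} (f : Y ⟶ X) (g : Z ⟶ Y) (pE : E ⟶ X)
    (u₁ : F ⟶ E) (u₂ : F ⟶ Y) (ε : F ⟶ Z)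
    (h : A ⟶ X) (v₁ : Ah ⟶ A) (v₂ : Ah ⟶ Y) (m : Ah ⟶ Z) (M : A ⟶ E) : Prop :=
  M ≫ pE = h ∧ ∀ fM : Ah ⟶ F, fM ≫ u₁ = v₁ ≫ M → fM ≫ u₂ = v₂ →
    FibHomotopic S g (fM ≫ ε) m

/-- `(pE, u₁, u₂, ε)` is a homotopy Π-type of the fibration `g : Z ⟶ Y` along the
fibration `f : Y ⟶ X`.  Here `pE : E ⟶ X` is the Π-fibration, `(F, u₁, u₂)` is a
pullback of `pE` along `f`, and `ε : f*pE ⟶ g` is the counit (a map over `Y`). -/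
structure IsHPi {Y X Z E F : C} (f : Y ⟶ X) (g : Z ⟶ Y) (pE : E ⟶ X)
    (u₁ : F ⟶ E) (u₂ : F ⟶ Y) (ε : F ⟶ Z) : Prop where
  fib : S.Fib pE
  pb : IsPB u₁ u₂ pE f
  over' : ε ≫ g = u₂
  lift : ∀ {A Ah : C} (h : A ⟶ X) (v₁ : Ah ⟶ A) (v₂ : Ah ⟶ Y), IsPB v₁ v₂ h f →
    ∀ m : Ah ⟶ Z, m ≫ g = v₂ →
      ∃ M : A ⟶ E, HPiLiftGood S f g pE u₁ u₂ ε h v₁ v₂ m M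
  unique : ∀ {A Ah : C} (h : A ⟶ X) (v₁ : Ah ⟶ A) (v₂ : Ah ⟶ Y), IsPB v₁ v₂ h f →
    ∀ m : Ah ⟶ Z, m ≫ g = v₂ → ∀ M M' : A ⟶ E,
      HPiLiftGood S f g pE u₁ u₂ ε h v₁ v₂ m M →
      HPiLiftGood S f g pE u₁ u₂ ε h v₁ v₂ m M' →
      FibHomotopic S pE M M'

/-- The path category has homotopy Π-types. -/
def HasHPi : Prop := ∀ ⦃Y X Z : C⦄ (f : Y ⟶ X) (g : Z ⟶ Y), S.Fib f → S.Fib g →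
  ∃ (E F : C) (pE : E ⟶ X) (u₁ : F ⟶ E) (u₂ : F ⟶ Y) (ε : F ⟶ Z),
    IsHPi S f g pE u₁ u₂ ε

/-- A class of small fibrations: contained in the fibrations, containing all
isomorphisms, closed under composition and stable under homotopy pullback. -/
def IsSmallClass (Small : ∀ ⦃X Y : C⦄, (X ⟶ Y) → Prop) : Prop :=
  (∀ ⦃X Y : C⦄ (f : X ⟶ Y), Small f → S.Fib f) ∧
  (∀ ⦃X Y : C⦄ (f : X ⟶ Y), IsIso f → Small f) ∧
  (∀ ⦃X Y Z : C⦄ (f : X ⟶ Y) (g : Y ⟶ Z), Small f → Small g → Small (f ≫ g)) ∧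
  (∀ ⦃D Cc B A : C⦄ (g : D ⟶ Cc) (top : D ⟶ B) (f : B ⟶ A) (bot : Cc ⟶ A),
    S.Fib g → S.Fib f → Small f → IsHomotopyPB S g top f bot → Small g)

/-- The class `Small` is closed under homotopy Π-types along arbitrary fibrations:
it is impredicative (polymorphic). -/
def ClosedUnderHPi (Small : ∀ ⦃X Y : C⦄, (X ⟶ Y) → Prop) : Prop :=
  ∀ ⦃Y X Z : C⦄ (f : Y ⟶ X) (g : Z ⟶ Y), S.Fib f → Small g →
    ∀ ⦃E F : C⦄ (pE : E ⟶ X) (u₁ : F ⟶ E) (u₂ : F ⟶ Y) (ε : F ⟶ Z),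
      IsHPi S f g pE u₁ u₂ ε → Small pE

end PathCatDefs

end EffPaper
namespace EffPaper
open CategoryTheory

universe v u

section Toolkit

variable {C : Type u} [Category.{v} C] {S : PathStruct C}

/-! ### Elementary consequences of 2-out-of-6 -/

theorem eqv_id (hS : IsPathCategory S) (X : C) : S.Eqv (𝟙 X) :=
  hS.eqv_of_iso _ inferInstance

theorem eqv_comp' (hS : IsPathCategory S) {X Y Z : C} {f : X ⟶ Y} {g : Y ⟶ Z}
    (hf : S.Eqv f) (hg : S.Eqv g) : S.Eqv (f ≫ g) := by
  have h := hS.two_out_of_six f (𝟙 Y) g (by simpa) (by simpa)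
  simpa using h.2.2.2

theorem eqv_cancel_left (hS : IsPathCategory S) {X Y Z : C} {f : X ⟶ Y} {g : Y ⟶ Z}
    (hf : S.Eqv f) (hfg : S.Eqv (f ≫ g)) : S.Eqv g :=
  (hS.two_out_of_six (𝟙 X) f g (by simpa) hfg).2.2.1

theorem eqv_cancel_right (hS : IsPathCategory S) {X Y Z : C} {f : X ⟶ Y} {g : Y ⟶ Z}
    (hg : S.Eqv g) (hfg : S.Eqv (f ≫ g)) : S.Eqv f :=
  (hS.two_out_of_six f g (𝟙 Z) hfg (by simpa)).1

/-! ### Pullback lemmas -/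

theorem IsPB.symm' {P X Y Z : C} {p₁ : P ⟶ X} {p₂ : P ⟶ Y} {f : X ⟶ Z} {g : Y ⟶ Z}
    (h : IsPB p₁ p₂ f g) : IsPB p₂ p₁ g f := by
  refine ⟨h.1.symm, fun Q q₁ q₂ hq => ?_⟩
  obtain ⟨l, ⟨hl1, hl2⟩, hu⟩ := h.2 Q q₂ q₁ hq.symm
  exact ⟨l, ⟨hl2, hl1⟩, fun l' hl' => hu l' ⟨hl'.2, hl'.1⟩⟩

theorem IsPB.hom_ext {P X Y Z Q : C} {p₁ : P ⟶ X} {p₂ : P ⟶ Y} {f : X ⟶ Z} {g : Y ⟶ Z}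
    (h : IsPB p₁ p₂ f g) {z₁ z₂ : Q ⟶ P}
    (h₁ : z₁ ≫ p₁ = z₂ ≫ p₁) (h₂ : z₁ ≫ p₂ = z₂ ≫ p₂) : z₁ = z₂ := by
  obtain ⟨l, _, hu⟩ := h.2 Q (z₂ ≫ p₁) (z₂ ≫ p₂)
    (by rw [Category.assoc, Category.assoc, h.1])
  rw [hu z₁ ⟨h₁, h₂⟩, hu z₂ ⟨rfl, rfl⟩]

theorem IsPB.lift' {P X Y Z Q : C} {p₁ : P ⟶ X} {p₂ : P ⟶ Y} {f : X ⟶ Z} {g : Y ⟶ Z}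
    (h : IsPB p₁ p₂ f g) (q₁ : Q ⟶ X) (q₂ : Q ⟶ Y) (hq : q₁ ≫ f = q₂ ≫ g) :
    ∃ l : Q ⟶ P, l ≫ p₁ = q₁ ∧ l ≫ p₂ = q₂ :=
  ((h.2 Q q₁ q₂ hq).exists)

theorem fib_pb (hS : IsPathCategory S) {P X Y Z : C} {p₁ : P ⟶ X} {p₂ : P ⟶ Y}
    {f : X ⟶ Z} {g : Y ⟶ Z} (h : IsPB p₁ p₂ f g) (hf : S.Fib f) : S.Fib p₂ := by
  obtain ⟨P', p₁', p₂', h', hfib'⟩ := hS.pullback f g hf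
  obtain ⟨i, hi1, hi2⟩ := h'.lift' p₁ p₂ h.1
  obtain ⟨i', hi'1, hi'2⟩ := h.lift' p₁' p₂' h'.1
  have hii : i ≫ i' = 𝟙 P := by
    apply h.hom_ext <;> simp [Category.assoc, hi'1, hi'2, hi1, hi2]
  have hii' : i' ≫ i = 𝟙 P' := by
    apply h'.hom_ext <;> simp [Category.assoc, hi'1, hi'2, hi1, hi2]
  have : IsIso i := ⟨i', hii, hii'⟩
  rw [← hi2]
  exact hS.fib_comp i p₂' (hS.fib_of_iso i this) hfib'

theorem IsBinProd.hom_ext {P X Y Q : C} {p₁ : P ⟶ X} {p₂ : P ⟶ Y}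
    (h : IsBinProd p₁ p₂) {z₁ z₂ : Q ⟶ P}
    (h₁ : z₁ ≫ p₁ = z₂ ≫ p₁) (h₂ : z₁ ≫ p₂ = z₂ ≫ p₂) : z₁ = z₂ := by
  obtain ⟨l, _, hu⟩ := h Q (z₂ ≫ p₁) (z₂ ≫ p₂)
  rw [hu z₁ ⟨h₁, h₂⟩, hu z₂ ⟨rfl, rfl⟩]

theorem binprod_fib (hS : IsPathCategory S) {W X Y : C} {π₁ : W ⟶ X} {π₂ : W ⟶ Y}
    (h : IsBinProd π₁ π₂) : S.Fib π₁ ∧ S.Fib π₂ := by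
  obtain ⟨T, hT, hTfib⟩ := hS.terminal
  obtain ⟨tX, htX⟩ := hT X
  obtain ⟨tY, htY⟩ := hT Y
  obtain ⟨W₂, e₁, e₂, hPB, hfe₂⟩ := hS.pullback tY tX (hTfib _ _)
  have hfe₁ : S.Fib e₁ := fib_pb hS hPB.symm' (hTfib _ _)
  obtain ⟨tW, htW⟩ := hT W
  obtain ⟨i, hi1, hi2⟩ := hPB.lift' π₂ π₁ (by rw [htW (π₂ ≫ tY), htW (π₁ ≫ tX)])
  obtain ⟨i', ⟨hi'1, hi'2⟩, _⟩ := h W₂ e₂ e₁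
  have hii : i ≫ i' = 𝟙 W := by
    apply h.hom_ext <;> simp [Category.assoc, hi1, hi2, hi'1, hi'2]
  have hii' : i' ≫ i = 𝟙 W₂ := by
    apply hPB.hom_ext <;> simp [Category.assoc, hi1, hi2, hi'1, hi'2]
  have hiso : IsIso i := ⟨i', hii, hii'⟩
  constructor
  · rw [← hi2]; exact hS.fib_comp i e₂ (hS.fib_of_iso i hiso) hfe₂
  · rw [← hi1]; exact hS.fib_comp i e₁ (hS.fib_of_iso i hiso) hfe₁

end Toolkit

section Toolkit2

variable {C : Type u} [Category.{v} C] {S : PathStruct C}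

/-- Factorisation of an arbitrary map as an equivalence followed by a fibration,
via the mapping path space; the equivalence comes with a trivial-fibration
retraction. -/
theorem factor (hS : IsPathCategory S) {M N : C} (k : M ⟶ N) :
    ∃ (Mt : C) (j : M ⟶ Mt) (q : Mt ⟶ N) (c : Mt ⟶ M),
      S.Eqv j ∧ S.Fib q ∧ j ≫ q = k ∧ S.Fib c ∧ S.Eqv c ∧ j ≫ c = 𝟙 M := by
  obtain ⟨PN, rN, sN, tN, hrE, hrs, hrt, WN, π₁, π₂, hN, hBP, hNπ₁, hNπ₂, hNfib⟩ :=
    hS.path_obj N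
  have hfibπ₁ : S.Fib π₁ := (binprod_fib hS hBP).1
  have hfibs : S.Fib sN := by rw [← hNπ₁]; exact hS.fib_comp _ _ hNfib hfibπ₁
  have heqs : S.Eqv sN := eqv_cancel_left hS hrE (by rw [hrs]; exact eqv_id hS N)
  have hfibt : S.Fib tN := by
    rw [← hNπ₂]; exact hS.fib_comp _ _ hNfib (binprod_fib hS hBP).2
  obtain ⟨Mt, cP, cM, hPBc, hfcM⟩ := hS.pullback sN k hfibs
  have hecM : S.Eqv cM := (hS.triv_fib_pb sN k cP cM hfibs heqs hPBc).2
  obtain ⟨j, hj1, hj2⟩ := hPBc.lift' (k ≫ rN) (𝟙 M)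
    (by rw [Category.assoc, hrs, Category.comp_id, Category.id_comp])
  have hje : S.Eqv j := eqv_cancel_right hS hecM (by rw [hj2]; exact eqv_id hS M)
  refine ⟨Mt, j, cP ≫ tN, cM, hje, ?_, by rw [← Category.assoc, hj1,
    Category.assoc, hrt, Category.comp_id], hfcM, hecM, hj2⟩
  -- Fibrancy of `q = cP ≫ tN`.
  obtain ⟨T, hT, hTfib⟩ := hS.terminal
  obtain ⟨tTN, _⟩ := hT N
  obtain ⟨tTM, _⟩ := hT M
  obtain ⟨MN, e₁, e₂, hPBMN, hfe₂⟩ := hS.pullback tTN tTM (hTfib _ _)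
  have hfe₁ : S.Fib e₁ := fib_pb hS hPBMN.symm' (hTfib _ _)
  obtain ⟨φ, ⟨hφ1, hφ2⟩, _⟩ := hBP MN (e₂ ≫ k) e₁
  obtain ⟨tMt, htMt⟩ := hT Mt
  obtain ⟨ψ, hψ1, hψ2⟩ := hPBMN.lift' (cP ≫ tN) cM
    (by rw [htMt ((cP ≫ tN) ≫ tTN), htMt (cM ≫ tTM)])
  have hPBψ : IsPB cP ψ hN φ := by
    constructor
    · apply hBP.hom_ext
      · rw [Category.assoc, Category.assoc, hNπ₁, hφ1, hPBc.1, ← Category.assoc, hψ2]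
      · rw [Category.assoc, Category.assoc, hNπ₂, hφ2, hψ1]
    · intro Q x y hxy
      obtain ⟨z, hz1, hz2⟩ := hPBc.lift' x (y ≫ e₂)
        (by rw [← hNπ₁, ← Category.assoc, hxy, Category.assoc, hφ1, Category.assoc])
      have hzψ : z ≫ ψ = y := by
        apply hPBMN.hom_ext
        · rw [Category.assoc, hψ1, ← Category.assoc, hz1, ← hNπ₂, ← Category.assoc,
            hxy, Category.assoc, hφ2]
        · rw [Category.assoc, hψ2, hz2]
      refine ⟨z, ⟨hz1, hzψ⟩, fun z' hz' => ?_⟩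
      apply hPBc.hom_ext
      · rw [hz'.1, hz1]
      · rw [← hψ2, ← Category.assoc, hz'.2, ← Category.assoc, hzψ]
  have hfψ : S.Fib ψ := fib_pb hS hPBψ hNfib
  have : cP ≫ tN = ψ ≫ e₁ := hψ1.symm
  rw [this]
  exact hS.fib_comp _ _ hfψ hfe₁

/-- Relative path objects exist for every fibration. -/
theorem relPathObj (hS : IsPathCategory S) {X I : C} {g : X ⟶ I} (hg : S.Fib g) :
    ∃ (P : C) (r : X ⟶ P) (s t : P ⟶ X), IsRelPathObj S g r s t := by
  obtain ⟨V, ρ₁, ρ₂, hPBV, _⟩ := hS.pullback g g hg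
  obtain ⟨δ, hδ1, hδ2⟩ := hPBV.lift' (𝟙 X) (𝟙 X) rfl
  obtain ⟨P, r, q, c, hre, hqf, hrq, _, _, _⟩ := factor hS δ
  refine ⟨P, r, q ≫ ρ₁, q ≫ ρ₂, hre, ?_, ?_, ?_, V, ρ₁, ρ₂, q, hPBV, rfl, rfl, hqf⟩
  · rw [← Category.assoc, hrq, hδ1]
  · rw [← Category.assoc, hrq, hδ2]
  · rw [Category.assoc, Category.assoc, hPBV.1]

theorem IsRelPathObj.flip {X I PX : C} {g : X ⟶ I} {r : X ⟶ PX} {s t : PX ⟶ X}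
    (h : IsRelPathObj S g r s t) : IsRelPathObj S g r t s := by
  obtain ⟨h1, h2, h3, h4, W, π₁, π₂, hW, hPB, hπ₁, hπ₂, hfib⟩ := h
  exact ⟨h1, h3, h2, h4.symm, W, π₂, π₁, hW, hPB.symm', hπ₂, hπ₁, hfib⟩

/-- The source and target maps of a relative path object are trivial fibrations. -/
theorem relpath_st (hS : IsPathCategory S) {X I PX : C} {g : X ⟶ I} (hg : S.Fib g)
    {r : X ⟶ PX} {s t : PX ⟶ X} (h : IsRelPathObj S g r s t) :
    S.Fib s ∧ S.Eqv s ∧ S.Fib t ∧ S.Eqv t := by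
  obtain ⟨h1, h2, h3, _, W, π₁, π₂, hW, hPB, hπ₁, hπ₂, hfib⟩ := h
  have hfπ₁ : S.Fib π₁ := fib_pb hS hPB.symm' hg
  have hfπ₂ : S.Fib π₂ := fib_pb hS hPB hg
  refine ⟨?_, ?_, ?_, ?_⟩
  · rw [← hπ₁]; exact hS.fib_comp _ _ hfib hfπ₁
  · exact eqv_cancel_left hS h1 (by rw [h2]; exact eqv_id hS X)
  · rw [← hπ₂]; exact hS.fib_comp _ _ hfib hfπ₂
  · exact eqv_cancel_left hS h1 (by rw [h3]; exact eqv_id hS X)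

/-! ### Basic homotopy calculus -/

theorem fibHomotopic_refl (hS : IsPathCategory S) {Z X I : C} {g : X ⟶ I}
    (hg : S.Fib g) (u : Z ⟶ X) : FibHomotopic S g u u := by
  obtain ⟨P, r, s, t, hrel⟩ := relPathObj hS hg
  exact ⟨P, r, s, t, hrel, u ≫ r, by rw [Category.assoc, hrel.2.1, Category.comp_id],
    by rw [Category.assoc, hrel.2.2.1, Category.comp_id]⟩

theorem FibHomotopic.symm {Z X I : C} {g : X ⟶ I} {u v : Z ⟶ X}
    (h : FibHomotopic S g u v) : FibHomotopic S g v u := by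
  obtain ⟨P, r, s, t, hrel, H, hs, ht⟩ := h
  exact ⟨P, r, t, s, hrel.flip, H, ht, hs⟩

theorem FibHomotopic.precomp {Z' Z X I : C} {g : X ⟶ I} {u v : Z ⟶ X}
    (e : Z' ⟶ Z) (h : FibHomotopic S g u v) :
    FibHomotopic S g (e ≫ u) (e ≫ v) := by
  obtain ⟨P, r, s, t, hrel, H, hs, ht⟩ := h
  exact ⟨P, r, s, t, hrel, e ≫ H, by rw [Category.assoc, hs], by rw [Category.assoc, ht]⟩

/-- Any two maps into a trivial fibration lying over the same map are fibrewise
homotopic. -/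
theorem trivfib_homotopic (hS : IsPathCategory S) {T B Z : C} {k : T ⟶ B}
    (hkf : S.Fib k) (hke : S.Eqv k) {z₁ z₂ : Z ⟶ T} (h : z₁ ≫ k = z₂ ≫ k) :
    FibHomotopic S k z₁ z₂ := by
  obtain ⟨P, r, s, t, hrel⟩ := relPathObj hS hkf
  obtain ⟨h1, h2, h3, h4, W, π₁, π₂, hW, hPB, hπ₁, hπ₂, hfib⟩ := hrel
  have hπ₁fe : S.Fib π₁ ∧ S.Eqv π₁ := hS.triv_fib_pb k k π₂ π₁ hkf hke hPB.symm'
  obtain ⟨δ, ⟨hδ1, hδ2⟩, hδu⟩ := hPB.2 T (𝟙 T) (𝟙 T) rfl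
  have hδe : S.Eqv δ := eqv_cancel_right hS hπ₁fe.2 (by rw [hδ1]; exact eqv_id hS T)
  have hrW : r ≫ hW = δ := hδu (r ≫ hW) ⟨by rw [Category.assoc, hπ₁, h2],
    by rw [Category.assoc, hπ₂, h3]⟩
  have hWe : S.Eqv hW := eqv_cancel_left hS h1 (by rw [hrW]; exact hδe)
  obtain ⟨ς, hς⟩ := hS.triv_fib_sect hW hfib hWe
  obtain ⟨pr, hpr1, hpr2⟩ := hPB.lift' z₁ z₂ h
  refine ⟨P, r, s, t, ⟨h1, h2, h3, h4, W, π₁, π₂, hW, hPB, hπ₁, hπ₂, hfib⟩,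
    pr ≫ ς, ?_, ?_⟩
  · rw [← hπ₁, ← Category.assoc, Category.assoc pr ς hW, hς, Category.comp_id, hpr1]
  · rw [← hπ₂, ← Category.assoc, Category.assoc pr ς hW, hς, Category.comp_id, hpr2]

end Toolkit2

section Toolkit3

variable {C : Type u} [Category.{v} C] {S : PathStruct C}

/-- **Master transport lemma.**  Given a fibration `π : E ⟶ T` over a fibration
`g : T ⟶ I` and a relative path object `PT` for `g`, any map `e` into `E` can be
transported along a path `Θ` in `T` starting at `e ≫ π`: there is `e'` lying over
the endpoint of `Θ` which is fibrewise homotopic (over `I`) to `e`. -/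
theorem master (hS : IsPathCategory S) {I T E PT : C} {g : T ⟶ I} (hg : S.Fib g)
    {π : E ⟶ T} (hπ : S.Fib π) {r : T ⟶ PT} {s t : PT ⟶ T}
    (hP : IsRelPathObj S g r s t) :
    ∀ {Z : C} (e : Z ⟶ E) (Θ : Z ⟶ PT), e ≫ π = Θ ≫ s →
      ∃ e' : Z ⟶ E, e' ≫ π = Θ ≫ t ∧ FibHomotopic S (π ≫ g) e e' := by
  obtain ⟨hre, hrs, hrt, hstg, V, ρ₁, ρ₂, hV, hPBV, hρ₁, hρ₂, hfibV⟩ := hP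
  have hsfib : S.Fib s := by
    rw [← hρ₁]; exact hS.fib_comp _ _ hfibV (fib_pb hS hPBV.symm' hg)
  have hseqv : S.Eqv s := eqv_cancel_left hS hre (by rw [hrs]; exact eqv_id hS T)
  -- `E ×_I E`
  obtain ⟨EE, pr₁, pr₂, hPBEE, _⟩ := hS.pullback (π ≫ g) (π ≫ g) (hS.fib_comp _ _ hπ hg)
  -- the comparison map `ν : E ×_I E ⟶ V`
  obtain ⟨ν, hν1, hν2⟩ := hPBV.lift' (pr₁ ≫ π) (pr₂ ≫ π)
    (by simp only [Category.assoc]; rw [hPBEE.1])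
  -- `Q`, the object of paths in `T` with endpoints lifted to `E`
  obtain ⟨Q, qc₁, qc₂, hPBQ, hfqc₂⟩ := hS.pullback hV ν hfibV
  -- the `r`-diagonal `δ' : E ⟶ Q`
  obtain ⟨δE, hδE1, hδE2⟩ := hPBEE.lift' (𝟙 E) (𝟙 E) rfl
  obtain ⟨δ', hδ'1, hδ'2⟩ := hPBQ.lift' (π ≫ r) δE (by
    apply hPBV.hom_ext
    · simp only [Category.assoc]
      rw [hρ₁, hrs, Category.comp_id, hν1, ← Category.assoc, hδE1, Category.id_comp]
    · simp only [Category.assoc]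
      rw [hρ₂, hrt, Category.comp_id, hν2, ← Category.assoc, hδE2, Category.id_comp])
  -- factor `δ'` to get the compatible path object `PE` for `E` over `I`
  obtain ⟨PE, rE, qE, _, hrEe, hqEf, hrqE, _, _, _⟩ := factor hS δ'
  have hrelE : IsRelPathObj S (π ≫ g) rE ((qE ≫ qc₂) ≫ pr₁) ((qE ≫ qc₂) ≫ pr₂) := by
    refine ⟨hrEe, ?_, ?_, ?_, EE, pr₁, pr₂, qE ≫ qc₂, hPBEE, rfl, rfl,
      hS.fib_comp _ _ hqEf hfqc₂⟩
    · simp only [Category.assoc]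
      rw [reassoc_of% hrqE, reassoc_of% hδ'2, hδE1]
    · simp only [Category.assoc]
      rw [reassoc_of% hrqE, reassoc_of% hδ'2, hδE2]
    · simp only [Category.assoc]
      rw [hPBEE.1]
  have hPπs : qE ≫ qc₁ ≫ s = qE ≫ qc₂ ≫ pr₁ ≫ π := by
    rw [← hρ₁, reassoc_of% hPBQ.1, hν1]
  have hPπt : qE ≫ qc₁ ≫ t = qE ≫ qc₂ ≫ pr₂ ≫ π := by
    rw [← hρ₂, reassoc_of% hPBQ.1, hν2]
  -- `D = E ×_T PT`, pulling back `s` along `π`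
  obtain ⟨D, dP, dE, hPBD, _⟩ := hS.pullback s π hsfib
  have hdEfe : S.Fib dE ∧ S.Eqv dE := hS.triv_fib_pb s π dP dE hsfib hseqv hPBD
  -- the map `χ : Q ⟶ D` is a pullback of `π`, hence a fibration
  obtain ⟨χ, hχ1, hχ2⟩ := hPBD.lift' qc₁ (qc₂ ≫ pr₁) (by
    simp only [Category.assoc]
    rw [← hρ₁, reassoc_of% hPBQ.1, hν1])
  have hPBχ : IsPB (qc₂ ≫ pr₂) χ π (dP ≫ t) := by
    constructor
    · simp only [Category.assoc]
      rw [reassoc_of% hχ1, ← hρ₂, reassoc_of% hPBQ.1, hν2]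
    · intro Z x y hxy
      obtain ⟨w, hw1, hw2⟩ := hPBEE.lift' (y ≫ dE) x (by
        simp only [Category.assoc]
        rw [← reassoc_of% hPBD.1, hstg, reassoc_of% hxy])
      obtain ⟨z, hz1, hz2⟩ := hPBQ.lift' (y ≫ dP) w (by
        apply hPBV.hom_ext
        · simp only [Category.assoc]
          rw [hρ₁, hν1, reassoc_of% hw1, hPBD.1]
        · simp only [Category.assoc]
          rw [hρ₂, hν2, reassoc_of% hw2, hxy])
      have hzχ : z ≫ χ = y := by
        apply hPBD.hom_ext
        · simp only [Category.assoc]; rw [hχ1, hz1]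
        · simp only [Category.assoc]; rw [hχ2, reassoc_of% hz2, hw1]
      refine ⟨z, ⟨by rw [reassoc_of% hz2, hw2], hzχ⟩, fun z' hz' => ?_⟩
      apply hPBQ.hom_ext
      · rw [hz1, ← hχ1, reassoc_of% hz'.2]
      · apply hPBEE.hom_ext
        · simp only [Category.assoc]
          rw [reassoc_of% hz2, hw1, ← hχ2]
          rw [← Category.assoc, hz'.2]
        · simp only [Category.assoc]
          rw [reassoc_of% hz2, hw2]
          exact hz'.1
  have hχfib : S.Fib χ := fib_pb hS hPBχ hπ
  -- `Φ = qE ≫ χ : PE ⟶ D` is a trivial fibration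
  have hΦfib : S.Fib (qE ≫ χ) := hS.fib_comp _ _ hqEf hχfib
  have hiD : S.Eqv (rE ≫ qE ≫ χ) := by
    apply eqv_cancel_right hS hdEfe.2
    have : (rE ≫ qE ≫ χ) ≫ dE = 𝟙 E := by
      simp only [Category.assoc]
      rw [reassoc_of% hrqE, hχ2, reassoc_of% hδ'2, hδE1]
    rw [this]; exact eqv_id hS E
  have hΦe : S.Eqv (qE ≫ χ) := eqv_cancel_left hS hrEe hiD
  obtain ⟨ς, hς⟩ := hS.triv_fib_sect (qE ≫ χ) hΦfib hΦe
  -- the client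
  intro Z e Θ hc
  obtain ⟨z, hz1, hz2⟩ := hPBD.lift' Θ e hc.symm
  refine ⟨(z ≫ ς) ≫ ((qE ≫ qc₂) ≫ pr₂), ?_,
    PE, rE, (qE ≫ qc₂) ≫ pr₁, (qE ≫ qc₂) ≫ pr₂, hrelE, z ≫ ς, ?_, rfl⟩
  · simp only [Category.assoc]
    rw [← hPπt, ← hχ1]
    simp only [Category.assoc]
    rw [reassoc_of% hς, reassoc_of% hz1]
  · simp only [Category.assoc]
    rw [← hχ2, reassoc_of% hς, hz2]

end Toolkit3

section Toolkit4

variable {C : Type u} [Category.{v} C] {S : PathStruct C}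

/-- Fibrations admit strict lower-triangle fillers against equivalences. -/
theorem lift_lower (hS : IsPathCategory S) {M N V T : C} {w : M ⟶ N} (hw : S.Eqv w)
    {q : V ⟶ T} (hq : S.Fib q) (a : M ⟶ V) (b : N ⟶ T) (hc : a ≫ q = w ≫ b) :
    ∃ c : N ⟶ V, c ≫ q = b := by
  obtain ⟨VN, pV, pN, hPBN, hfpN⟩ := hS.pullback q b hq
  obtain ⟨ta, hta1, hta2⟩ := hPBN.lift' a w hc
  obtain ⟨Mt, j, qm, cm, hje, hqmf, hjqm, hcmf, hcme, hjcm⟩ := factor hS w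
  have hqme : S.Eqv qm := eqv_cancel_left hS hje (by rw [hjqm]; exact hw)
  obtain ⟨σm, hσm⟩ := hS.triv_fib_sect qm hqmf hqme
  obtain ⟨V', pV', pM', hPB', hfpM'⟩ := hS.pullback pN qm hfpN
  obtain ⟨ta', hta'1, hta'2⟩ := hPB'.lift' ta j (by rw [hta2, hjqm])
  -- transport along the contraction of `Mt` onto `M`
  have G : FibHomotopic S cm (cm ≫ j) (𝟙 Mt) := by
    apply trivfib_homotopic hS hcmf hcme
    rw [Category.assoc, hjcm, Category.comp_id, Category.id_comp]
  obtain ⟨P, r, s, t, hrel, GG, hGs, hGt⟩ := G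
  obtain ⟨e', he', _⟩ := master hS hcmf hfpM' hrel (cm ≫ ta') GG
    (by rw [Category.assoc, hta'2, hGs])
  refine ⟨σm ≫ e' ≫ pV' ≫ pV, ?_⟩
  simp only [Category.assoc]
  rw [hPBN.1, reassoc_of% hPB'.1, reassoc_of% he', reassoc_of% hGt, reassoc_of% hσm]

/-- Retargeting: a fibrewise homotopy can be pushed forward along a map of
fibrations and realised in any prescribed relative path object. -/
theorem retarget (hS : IsPathCategory S) {X I X' I' : C} {g : X ⟶ I} {g' : X' ⟶ I'}
    (φ : X ⟶ X') (κ : I ⟶ I') (hφ : φ ≫ g' = g ≫ κ)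
    {P' : C} {r' : X' ⟶ P'} {s' t' : P' ⟶ X'} (hrel' : IsRelPathObj S g' r' s' t')
    {Z : C} {u v : Z ⟶ X} (h : FibHomotopic S g u v) :
    ∃ H' : Z ⟶ P', H' ≫ s' = u ≫ φ ∧ H' ≫ t' = v ≫ φ := by
  obtain ⟨P, r, s, t, hrel, H, hs, ht⟩ := h
  obtain ⟨hre', hrs', hrt', hstg', W', π₁', π₂', h', hPB', hπ₁', hπ₂', hfib'⟩ := hrel'
  obtain ⟨hre, hrs, hrt, hstg, _, _, _, _, _, _, _, _⟩ := hrel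
  obtain ⟨bmap, hb1, hb2⟩ := hPB'.lift' (s ≫ φ) (t ≫ φ) (by
    simp only [Category.assoc]
    rw [hφ, ← Category.assoc, ← Category.assoc, hstg])
  obtain ⟨θ, hθ⟩ := lift_lower hS hre hfib' (φ ≫ r') bmap (by
    apply hPB'.hom_ext
    · simp only [Category.assoc]
      rw [hπ₁', hrs', Category.comp_id, hb1, ← Category.assoc, hrs, Category.id_comp]
    · simp only [Category.assoc]
      rw [hπ₂', hrt', Category.comp_id, hb2, ← Category.assoc, hrt, Category.id_comp])
  refine ⟨H ≫ θ, ?_, ?_⟩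
  · rw [← hπ₁', Category.assoc, ← Category.assoc θ, hθ, hb1, ← Category.assoc, hs]
  · rw [← hπ₂', Category.assoc, ← Category.assoc θ, hθ, hb2, ← Category.assoc, ht]

/-- Pushing a fibrewise homotopy forward along a map of fibrations. -/
theorem FibHomotopic.postcomp (hS : IsPathCategory S) {X I X' I' : C} {g : X ⟶ I}
    {g' : X' ⟶ I'} (hg' : S.Fib g') (φ : X ⟶ X') (κ : I ⟶ I') (hφ : φ ≫ g' = g ≫ κ)
    {Z : C} {u v : Z ⟶ X} (h : FibHomotopic S g u v) :
    FibHomotopic S g' (u ≫ φ) (v ≫ φ) := by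
  obtain ⟨P', r', s', t', hrel'⟩ := relPathObj hS hg'
  obtain ⟨H', h1, h2⟩ := retarget hS φ κ hφ hrel' h
  exact ⟨P', r', s', t', hrel', H', h1, h2⟩

/-- Concatenation: two paths with a common source have fibrewise homotopic
targets. -/
theorem concat (hS : IsPathCategory S) {X I PT : C} {g : X ⟶ I} (hg : S.Fib g)
    {r : X ⟶ PT} {s t : PT ⟶ X} (hP : IsRelPathObj S g r s t)
    {Z : C} {H₁ H₂ : Z ⟶ PT} (hss : H₁ ≫ s = H₂ ≫ s) :
    FibHomotopic S g (H₁ ≫ t) (H₂ ≫ t) := by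
  obtain ⟨hre, hrs, hrt, hstg, V, ρ₁, ρ₂, hV, hPBV, hρ₁, hρ₂, hfibV⟩ := hP
  have hfρ₁ : S.Fib ρ₁ := fib_pb hS hPBV.symm' hg
  have hfρ₂ : S.Fib ρ₂ := fib_pb hS hPBV hg
  have hsfib : S.Fib s := by rw [← hρ₁]; exact hS.fib_comp _ _ hfibV hfρ₁
  have hseqv : S.Eqv s := eqv_cancel_left hS hre (by rw [hrs]; exact eqv_id hS X)
  obtain ⟨Q, c₁, c₂, hPBQ, hfc₂⟩ := hS.pullback s s hsfib
  have hc₂e : S.Eqv c₂ := (hS.triv_fib_pb s s c₁ c₂ hsfib hseqv hPBQ).2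
  obtain ⟨rQ, hrQ1, hrQ2⟩ := hPBQ.lift' r r rfl
  obtain ⟨R, d₂, d₁, hPBR, hfd₁⟩ := hS.pullback ρ₁ s hfρ₁
  obtain ⟨T', e₁, e₂, hPBT, hfe₂⟩ := hS.pullback ρ₂ ρ₁ hfρ₂
  obtain ⟨β, hβ1, hβ2⟩ := hPBV.lift' (d₁ ≫ t) (d₂ ≫ ρ₂) (by
    simp only [Category.assoc]
    rw [← hstg, ← reassoc_of% hPBR.1, hPBV.1])
  obtain ⟨γ, hγ1, hγ2⟩ := hPBT.lift' (d₁ ≫ hV) β (by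
    simp only [Category.assoc]; rw [hρ₂, hβ1])
  have hPBγ : IsPB d₁ γ hV e₁ := by
    constructor
    · rw [← hγ1]
    · intro Z' x y hxy
      obtain ⟨w', hw'1, hw'2⟩ := hPBV.lift' (x ≫ s) (y ≫ e₂ ≫ ρ₂) (by
        simp only [Category.assoc]
        rw [← hPBV.1, ← reassoc_of% hPBT.1, ← reassoc_of% hxy, reassoc_of% hρ₂, hstg])
      obtain ⟨z, hz1, hz2⟩ := hPBR.lift' w' x (by rw [hw'1])
      have hzβ : z ≫ β = y ≫ e₂ := by
        apply hPBV.hom_ext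
        · simp only [Category.assoc]
          rw [hβ1, ← hPBT.1, ← reassoc_of% hxy, hρ₂, ← Category.assoc, hz2]
        · simp only [Category.assoc]
          rw [hβ2, reassoc_of% hz1, hw'2]
      have hzγ : z ≫ γ = y := by
        apply hPBT.hom_ext
        · simp only [Category.assoc]
          rw [hγ1, ← Category.assoc, hz2, hxy]
        · simp only [Category.assoc]
          rw [hγ2, hzβ]
      refine ⟨z, ⟨hz2, hzγ⟩, fun z' hz' => ?_⟩
      apply hPBR.hom_ext
      · apply hPBV.hom_ext
        · simp only [Category.assoc]
          rw [hPBR.1, ← Category.assoc, hz'.1, ← Category.assoc, hz2]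
        · simp only [Category.assoc]
          have h1 : z' ≫ d₂ ≫ ρ₂ = z' ≫ β ≫ ρ₂ := by rw [hβ2]
          have h2 : z ≫ d₂ ≫ ρ₂ = z ≫ β ≫ ρ₂ := by rw [hβ2]
          rw [h1, h2, ← hγ2]
          simp only [Category.assoc]
          rw [reassoc_of% hz'.2, reassoc_of% hzγ]
      · rw [hz'.1, hz2]
  have hfγ : S.Fib γ := fib_pb hS hPBγ hfibV
  have hfβ : S.Fib β := by rw [← hγ2]; exact hS.fib_comp _ _ hfγ hfe₂
  obtain ⟨α, hα1, hα2⟩ := hPBR.lift' (c₂ ≫ hV) c₁ (by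
    simp only [Category.assoc]; rw [hρ₁, hPBQ.1])
  have hPBα : IsPB c₂ α hV d₂ := by
    constructor
    · rw [← hα1]
    · intro Z' x y hxy
      obtain ⟨z, hz1, hz2⟩ := hPBQ.lift' (y ≫ d₁) x (by
        rw [Category.assoc, ← hPBR.1, ← reassoc_of% hxy, hρ₁])
      have hzα : z ≫ α = y := by
        apply hPBR.hom_ext
        · simp only [Category.assoc]
          rw [hα1, reassoc_of% hz2, hxy]
        · simp only [Category.assoc]
          rw [hα2, hz1]
      refine ⟨z, ⟨hz2, hzα⟩, fun z' hz' => ?_⟩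
      apply hPBQ.hom_ext
      · rw [← hα2, ← Category.assoc, hz'.2, ← Category.assoc, hzα]
      · rw [hz'.1, hz2]
  have hfα : S.Fib α := fib_pb hS hPBα hfibV
  have hrelQ : IsRelPathObj S g rQ (c₁ ≫ t) (c₂ ≫ t) := by
    refine ⟨eqv_cancel_right hS hc₂e (by rw [hrQ2]; exact hre), ?_, ?_, ?_,
      V, ρ₁, ρ₂, α ≫ β, hPBV, ?_, ?_, hS.fib_comp _ _ hfα hfβ⟩
    · rw [← Category.assoc, hrQ1, hrt]
    · rw [← Category.assoc, hrQ2, hrt]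
    · simp only [Category.assoc]
      rw [← hstg, reassoc_of% hPBQ.1]
    · simp only [Category.assoc]
      rw [hβ1, ← Category.assoc, hα2]
    · simp only [Category.assoc]
      rw [hβ2, reassoc_of% hα1, hρ₂]
  obtain ⟨HH, hHH1, hHH2⟩ := hPBQ.lift' H₁ H₂ hss
  exact ⟨Q, rQ, c₁ ≫ t, c₂ ≫ t, hrelQ, HH,
    by rw [← Category.assoc, hHH1], by rw [← Category.assoc, hHH2]⟩

/-- Fibrewise homotopy is transitive. -/
theorem FibHomotopic.trans (hS : IsPathCategory S) {X I : C} {g : X ⟶ I}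
    (hg : S.Fib g) {Z : C} {u v w : Z ⟶ X}
    (h1 : FibHomotopic S g u v) (h2 : FibHomotopic S g v w) :
    FibHomotopic S g u w := by
  obtain ⟨P, r, s, t, hrel⟩ := relPathObj hS hg
  obtain ⟨H1, hH11, hH12⟩ := retarget hS (𝟙 X) (𝟙 I) (by simp) hrel h1.symm
  obtain ⟨H2, hH21, hH22⟩ := retarget hS (𝟙 X) (𝟙 I) (by simp) hrel h2
  have := concat hS hg hrel (hH11.trans (by rw [hH21]))
  rw [hH12, hH22, Category.comp_id, Category.comp_id] at this
  exact this

end Toolkit4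

section Toolkit5

variable {C : Type u} [Category.{v} C] {S : PathStruct C}

/-- `IsHPi` is invariant under replacing the counit by a fibrewise homotopic one. -/
theorem hpi_eps_invar (hS : IsPathCategory S) {Y X Z E F : C} {f : Y ⟶ X}
    {g : Z ⟶ Y} (hg : S.Fib g) {pE : E ⟶ X} {u₁ : F ⟶ E} {u₂ : F ⟶ Y}
    {ε ε' : F ⟶ Z} (hHPi : IsHPi S f g pE u₁ u₂ ε) (hε' : ε' ≫ g = u₂)
    (hh : FibHomotopic S g ε ε') : IsHPi S f g pE u₁ u₂ ε' := by
  refine ⟨hHPi.fib, hHPi.pb, hε', ?_, ?_⟩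
  · intro A Ah h v₁ v₂ hv m hm
    obtain ⟨M, hM1, hM2⟩ := hHPi.lift h v₁ v₂ hv m hm
    exact ⟨M, hM1, fun fM h1 h2 =>
      ((hh.precomp fM).symm).trans hS hg (hM2 fM h1 h2)⟩
  · intro A Ah h v₁ v₂ hv m hm M M' hgood hgood'
    refine hHPi.unique h v₁ v₂ hv m hm M M' ⟨hgood.1, fun fM h1 h2 =>
      (hh.precomp fM).trans hS hg (hgood.2 fM h1 h2)⟩
      ⟨hgood'.1, fun fM h1 h2 => (hh.precomp fM).trans hS hg (hgood'.2 fM h1 h2)⟩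

/-- Transfer of the homotopy Π-type structure along a strict retract whose
retraction is a trivial fibration over the base. -/
theorem hpi_retract (hS : IsPathCategory S) {Y X Z E₀ E₁ F₀ F₁ : C} {f : Y ⟶ X}
    {g : Z ⟶ Y} (hg : S.Fib g) {pE₀ : E₀ ⟶ X} {u₁ : F₀ ⟶ E₀} {u₂ : F₀ ⟶ Y}
    {ε₀ : F₀ ⟶ Z} (h0 : IsHPi S f g pE₀ u₁ u₂ ε₀)
    {pE₁ : E₁ ⟶ X} (hpE₁ : S.Fib pE₁)
    {j : E₀ ⟶ E₁} {c : E₁ ⟶ E₀} (hcf : S.Fib c) (hce : S.Eqv c)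
    (hjc : j ≫ c = 𝟙 E₀) (hjp : j ≫ pE₁ = pE₀) (hcp : c ≫ pE₀ = pE₁)
    {v₁ : F₁ ⟶ E₁} {v₂ : F₁ ⟶ Y} (hF₁ : IsPB v₁ v₂ pE₁ f)
    {fc : F₁ ⟶ F₀} (hfc₁ : fc ≫ u₁ = v₁ ≫ c) (hfc₂ : fc ≫ u₂ = v₂) :
    IsHPi S f g pE₁ v₁ v₂ (fc ≫ ε₀) := by
  refine ⟨hpE₁, hF₁, by rw [Category.assoc, h0.over', hfc₂], ?_, ?_⟩
  · intro A Ah h w₁ w₂ hw m hm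
    obtain ⟨M₀, hM₀1, hM₀2⟩ := h0.lift h w₁ w₂ hw m hm
    refine ⟨M₀ ≫ j, by rw [Category.assoc, hjp, hM₀1], ?_⟩
    intro fM h1 h2
    have hfMfc : (fM ≫ fc) ≫ u₁ = w₁ ≫ M₀ ∧ (fM ≫ fc) ≫ u₂ = w₂ := by
      constructor
      · simp only [Category.assoc]
        rw [hfc₁, ← Category.assoc, h1]
        simp only [Category.assoc]
        rw [hjc, Category.comp_id]
      · rw [Category.assoc, hfc₂, h2]
    have := hM₀2 (fM ≫ fc) hfMfc.1 hfMfc.2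
    simpa only [Category.assoc] using this
  · intro A Ah h w₁ w₂ hw m hm M₁ M₁' hgood hgood'
    obtain ⟨fM₁, hfM₁1, hfM₁2⟩ := hF₁.lift' (w₁ ≫ M₁) w₂
      (by rw [Category.assoc, hgood.1, hw.1])
    obtain ⟨fM₁', hfM₁'1, hfM₁'2⟩ := hF₁.lift' (w₁ ≫ M₁') w₂
      (by rw [Category.assoc, hgood'.1, hw.1])
    have goodc : ∀ (M : A ⟶ E₁) (fM : Ah ⟶ F₁),
        HPiLiftGood S f g pE₁ v₁ v₂ (fc ≫ ε₀) h w₁ w₂ m M →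
        fM ≫ v₁ = w₁ ≫ M → fM ≫ v₂ = w₂ →
        HPiLiftGood S f g pE₀ u₁ u₂ ε₀ h w₁ w₂ m (M ≫ c) := by
      intro M fM hgM hfM1 hfM2
      constructor
      · rw [Category.assoc, hcp, hgM.1]
      · intro φ hφ1 hφ2
        have hφ : φ = fM ≫ fc := by
          apply h0.pb.hom_ext
          · rw [hφ1, Category.assoc, hfc₁, reassoc_of% hfM1]
          · rw [hφ2, Category.assoc, hfc₂, hfM2]
        rw [hφ, Category.assoc]
        exact hgM.2 fM hfM1 hfM2
    have huniq := h0.unique h w₁ w₂ hw m hm (M₁ ≫ c) (M₁' ≫ c)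
      (goodc M₁ fM₁ hgood hfM₁1 hfM₁2) (goodc M₁' fM₁' hgood' hfM₁'1 hfM₁'2)
    -- `M ≃ M ≫ c ≫ j` over `X`
    have hcj : FibHomotopic S c (c ≫ j) (𝟙 E₁) := by
      apply trivfib_homotopic hS hcf hce
      rw [Category.assoc, hjc, Category.comp_id, Category.id_comp]
    have key : ∀ M : A ⟶ E₁, FibHomotopic S pE₁ M ((M ≫ c) ≫ j) := by
      intro M
      have h1 : FibHomotopic S c (M ≫ (c ≫ j)) (M ≫ 𝟙 E₁) := hcj.precomp M
      have h2 : FibHomotopic S pE₁ ((M ≫ (c ≫ j)) ≫ 𝟙 E₁) ((M ≫ 𝟙 E₁) ≫ 𝟙 E₁) :=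
        h1.postcomp hS hpE₁ (𝟙 E₁) pE₀ (by rw [Category.id_comp, hcp])
      simp only [Category.comp_id, Category.assoc] at h2
      exact (FibHomotopic.symm (by simpa only [Category.assoc] using h2))
    have hmid : FibHomotopic S pE₁ ((M₁ ≫ c) ≫ j) ((M₁' ≫ c) ≫ j) := by
      have := huniq.postcomp hS hpE₁ j (𝟙 X) (by rw [hjp, Category.comp_id])
      exact this
    exact ((key M₁).trans hS hpE₁ hmid).trans hS hpE₁ (key M₁').symm

/-- Evaluation is homotopy invariant: maps into `FA = f*EA` whose `EA`-components
are connected by a path over `X` and whose `Y`-components agree have fibrewise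
homotopic `εA`-evaluations. -/
theorem ev_homotopic (hS : IsPathCategory S) {Y X A EA FA PEA : C} {f : Y ⟶ X}
    {pA : A ⟶ Y} (hpA : S.Fib pA) {pEA : EA ⟶ X} (hpEA : S.Fib pEA)
    {uA₁ : FA ⟶ EA} {uA₂ : FA ⟶ Y} (hFA : IsPB uA₁ uA₂ pEA f)
    {εA : FA ⟶ A} (hεA : εA ≫ pA = uA₂)
    {rr : EA ⟶ PEA} {ss tt : PEA ⟶ EA} (hPEA : IsRelPathObj S pEA rr ss tt)
    {Z : C} {z z' : Z ⟶ FA} (hY : z ≫ uA₂ = z' ≫ uA₂)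
    (H : Z ⟶ PEA) (H1 : H ≫ ss = z ≫ uA₁) (H2 : H ≫ tt = z' ≫ uA₁) :
    FibHomotopic S pA (z ≫ εA) (z' ≫ εA) := by
  obtain ⟨hre, hrs, hrt, hstE, VE, π₁e, π₂e, he, hPBe, he1, he2, hfe⟩ := hPEA
  have hfuA₂ : S.Fib uA₂ := fib_pb hS hFA hpEA
  have hfss : S.Fib ss := by rw [← he1]; exact hS.fib_comp _ _ hfe (fib_pb hS hPBe.symm' hpEA)
  have hess : S.Eqv ss := eqv_cancel_left hS hre (by rw [hrs]; exact eqv_id hS EA)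
  obtain ⟨RFA, ρP, ρF, hPBR, hfρF⟩ := hS.pullback ss uA₁ hfss
  have heρF : S.Eqv ρF := (hS.triv_fib_pb ss uA₁ ρP ρF hfss hess hPBR).2
  obtain ⟨tR, htR1, htR2⟩ := hFA.lift' (ρP ≫ tt) (ρF ≫ uA₂) (by
    simp only [Category.assoc]
    rw [← hstE, reassoc_of% hPBR.1, hFA.1])
  obtain ⟨rR, hrR1, hrR2⟩ := hPBR.lift' (uA₁ ≫ rr) (𝟙 FA) (by
    rw [Category.assoc, hrs, Category.comp_id, Category.id_comp])
  obtain ⟨WF, w₁', w₂', hPBW, _⟩ := hS.pullback uA₂ uA₂ hfuA₂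
  obtain ⟨hR, hhR1, hhR2⟩ := hPBW.lift' ρF tR (by rw [htR2])
  obtain ⟨ν', hν'1, hν'2⟩ := hPBe.lift' (w₁' ≫ uA₁) (w₂' ≫ uA₁) (by
    simp only [Category.assoc]
    rw [hFA.1, ← Category.assoc, ← Category.assoc, hPBW.1])
  have hPBhR : IsPB ρP hR he ν' := by
    constructor
    · apply hPBe.hom_ext
      · simp only [Category.assoc]
        rw [he1, hν'1, hPBR.1, ← Category.assoc, hhR1]
      · simp only [Category.assoc]
        rw [he2, hν'2, ← Category.assoc, hhR2, htR1]
    · intro Q a b hab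
      obtain ⟨z'', hz''1, hz''2⟩ := hPBR.lift' a (b ≫ w₁') (by
        rw [← he1, ← Category.assoc, hab]
        simp only [Category.assoc]
        rw [hν'1])
      have hz''hR : z'' ≫ hR = b := by
        apply hPBW.hom_ext
        · simp only [Category.assoc]
          rw [hhR1, hz''2]
        · simp only [Category.assoc]
          rw [hhR2]
          apply hFA.hom_ext
          · simp only [Category.assoc]
            rw [htR1, ← Category.assoc, hz''1, ← he2, ← Category.assoc, hab]
            simp only [Category.assoc]
            rw [hν'2]
          · simp only [Category.assoc]
            rw [htR2, ← Category.assoc, hz''2]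
            simp only [Category.assoc]
            rw [hPBW.1]
      refine ⟨z'', ⟨hz''1, hz''hR⟩, fun z₃ hz₃ => ?_⟩
      apply hPBR.hom_ext
      · rw [hz₃.1, hz''1]
      · rw [← hhR1, ← Category.assoc, hz₃.2, ← Category.assoc, hz''hR]
  have hfhR : S.Fib hR := fib_pb hS hPBhR hfe
  have hrelR : IsRelPathObj S uA₂ rR ρF tR := by
    refine ⟨eqv_cancel_right hS heρF (by rw [hrR2]; exact eqv_id hS FA), hrR2, ?_,
      htR2.symm, WF, w₁', w₂', hR, hPBW, hhR1, hhR2, hfhR⟩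
    apply hFA.hom_ext
    · simp only [Category.assoc]
      rw [htR1, ← Category.assoc, hrR1, Category.assoc, hrt, Category.comp_id,
        Category.id_comp]
    · simp only [Category.assoc]
      rw [htR2, ← Category.assoc, hrR2, Category.id_comp]
  obtain ⟨HR, hHR1, hHR2⟩ := hPBR.lift' H z (by rw [H1])
  have hHRt : HR ≫ tR = z' := by
    apply hFA.hom_ext
    · rw [Category.assoc, htR1, ← Category.assoc, hHR1, H2]
    · rw [Category.assoc, htR2, ← Category.assoc, hHR2, hY]
  have hzz' : FibHomotopic S uA₂ z z' :=
    ⟨RFA, rR, ρF, tR, hrelR, HR, hHR2, hHRt⟩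
  have := hzz'.postcomp hS hpA εA (𝟙 Y) (by rw [hεA, Category.comp_id])
  exact this

end Toolkit5

end EffPaper
namespace EffPaper
open CategoryTheory

/-- Let `C` be a path category with homotopy Π-types, `f : Y ⟶ X` a
fibration, `pA : A ⟶ Y` a fibration (an object of `C(Y)`) and `p : B ⟶ A` a
fibration in `C(Y)`; let `(pEA, uA₁, uA₂, εA)` be a homotopy Π-type of `pA` along
`f`.  Then there is a homotopy Π-type `(pEB, uB₁, uB₂, εB)` of `B` (as an object of
`C(Y)` via `p ≫ pA`) along `f`, together with a fibration `Π_f(p) : EB ⟶ EA` over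
`X`, such that (1) the square of counits commutes, and (2) for each object
`pC : Cc ⟶ X` of `C(X)` the induced square of homotopy hom-sets is a pullback of
sets (stated elementwise: the map to the cone of the cospan is injective and
surjective up to fibrewise homotopy). -/
theorem hPi_of_fibration_is_fibration {C : Type u} [Category.{v} C]
    (S : PathStruct C) (hS : IsPathCategory S) (hPi : HasHPi S)
    {Y X A B : C} (f : Y ⟶ X) (hf : S.Fib f)
    (pA : A ⟶ Y) (hpA : S.Fib pA) (p : B ⟶ A) (hp : S.Fib p)
    {EA FA : C} (pEA : EA ⟶ X) (uA₁ : FA ⟶ EA) (uA₂ : FA ⟶ Y) (εA : FA ⟶ A)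
    (hEA : IsHPi S f pA pEA uA₁ uA₂ εA) :
    ∃ (EB FB : C) (pEB : EB ⟶ X) (uB₁ : FB ⟶ EB) (uB₂ : FB ⟶ Y) (εB : FB ⟶ B),
      IsHPi S f (p ≫ pA) pEB uB₁ uB₂ εB ∧
      ∃ Pifp : EB ⟶ EA, S.Fib Pifp ∧ Pifp ≫ pEA = pEB ∧
        -- (1) the square of counits commutes: `f*(Π_f p) ≫ εA = εB ≫ p`
        (∀ m : FB ⟶ FA, m ≫ uA₁ = uB₁ ≫ Pifp → m ≫ uA₂ = uB₂ →
          εB ≫ p = m ≫ εA) ∧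
        -- (2) for each object `pC : Cc ⟶ X` of `C(X)`, with `(FC, w₁, w₂)` the
        -- pullback `f*C`, the square of homotopy hom-sets is a pullback of sets:
        (∀ {Cc FC : C} (pC : Cc ⟶ X), S.Fib pC →
          ∀ (w₁ : FC ⟶ Cc) (w₂ : FC ⟶ Y), IsPB w₁ w₂ pC f →
          -- commutativity of the square
          (∀ MB : Cc ⟶ EB, MB ≫ pEB = pC →
            ∀ mB : FC ⟶ FB, mB ≫ uB₁ = w₁ ≫ MB → mB ≫ uB₂ = w₂ →
            ∀ mA : FC ⟶ FA, mA ≫ uA₁ = w₁ ≫ (MB ≫ Pifp) → mA ≫ uA₂ = w₂ →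
              FibHomotopic S pA (mA ≫ εA) (mB ≫ εB ≫ p)) ∧
          -- injectivity
          (∀ MB MB' : Cc ⟶ EB, MB ≫ pEB = pC → MB' ≫ pEB = pC →
            FibHomotopic S pEA (MB ≫ Pifp) (MB' ≫ Pifp) →
            (∀ mB mB' : FC ⟶ FB, mB ≫ uB₁ = w₁ ≫ MB → mB ≫ uB₂ = w₂ →
              mB' ≫ uB₁ = w₁ ≫ MB' → mB' ≫ uB₂ = w₂ →
              FibHomotopic S (p ≫ pA) (mB ≫ εB) (mB' ≫ εB)) →
            FibHomotopic S pEB MB MB') ∧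
          -- surjectivity
          (∀ (MA : Cc ⟶ EA) (n : FC ⟶ B), MA ≫ pEA = pC → n ≫ (p ≫ pA) = w₂ →
            (∀ mA : FC ⟶ FA, mA ≫ uA₁ = w₁ ≫ MA → mA ≫ uA₂ = w₂ →
              FibHomotopic S pA (mA ≫ εA) (n ≫ p)) →
            ∃ MB : Cc ⟶ EB, MB ≫ pEB = pC ∧
              FibHomotopic S pEA (MB ≫ Pifp) MA ∧
              ∀ mB : FC ⟶ FB, mB ≫ uB₁ = w₁ ≫ MB → mB ≫ uB₂ = w₂ →
                FibHomotopic S (p ≫ pA) (mB ≫ εB) n)) := by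
  classical
  have hg : S.Fib (p ≫ pA) := hS.fib_comp _ _ hp hpA
  -- a free homotopy Π-type `E₀` of `p ≫ pA` along `f`
  obtain ⟨E₀, F₀, pE₀, u₁, u₂, ε₀, h0⟩ := hPi f (p ≫ pA) hf hg
  -- comparison map `G₀ : E₀ ⟶ EA`
  obtain ⟨G₀, hG₀p, hG₀good⟩ := hEA.lift pE₀ u₁ u₂ h0.pb (ε₀ ≫ p)
    (by rw [Category.assoc, h0.over'])
  obtain ⟨fG₀, hfG₀1, hfG₀2⟩ := hEA.pb.lift' (u₁ ≫ G₀) u₂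
    (by rw [Category.assoc, hG₀p, h0.pb.1])
  have θ₀ : FibHomotopic S pA (fG₀ ≫ εA) (ε₀ ≫ p) := hG₀good fG₀ hfG₀1 hfG₀2
  obtain ⟨P₀, r₀, s₀, t₀, hrel₀, H₀, hH₀s, hH₀t⟩ := θ₀
  -- strictify the counit over `A`
  obtain ⟨ε₀', hε₀'p, hhom₀⟩ := master hS hpA hp hrel₀.flip ε₀ H₀ hH₀t.symm
  rw [hH₀s] at hε₀'p
  have h0' : IsHPi S f (p ≫ pA) pE₀ u₁ u₂ ε₀' := by
    apply hpi_eps_invar hS hg h0 _ hhom₀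
    rw [← Category.assoc, hε₀'p, Category.assoc, hEA.over', hfG₀2]
  -- a relative path object for `pEA` over `X`
  obtain ⟨PEA, rr, ss, tt, hPEA⟩ := relPathObj hS hEA.fib
  obtain ⟨hrrE, hrrs, hrrt, hstE, VE, π₁e, π₂e, he, hPBe, he1, he2, hfe⟩ := hPEA
  have hPEA' : IsRelPathObj S pEA rr ss tt :=
    ⟨hrrE, hrrs, hrrt, hstE, VE, π₁e, π₂e, he, hPBe, he1, he2, hfe⟩
  have hfss : S.Fib ss := by
    rw [← he1]; exact hS.fib_comp _ _ hfe (fib_pb hS hPBe.symm' hEA.fib)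
  have hess : S.Eqv ss := eqv_cancel_left hS hrrE (by rw [hrrs]; exact eqv_id hS EA)
  -- the mapping path space `E₁` of `G₀`
  obtain ⟨E₁, k₁, k₂, hPBk, hfk₂⟩ := hS.pullback ss G₀ hfss
  have hek₂ : S.Eqv k₂ := (hS.triv_fib_pb ss G₀ k₁ k₂ hfss hess hPBk).2
  obtain ⟨j, hj1, hj2⟩ := hPBk.lift' (G₀ ≫ rr) (𝟙 E₀)
    (by rw [Category.assoc, hrrs, Category.comp_id, Category.id_comp])
  have hjq : j ≫ (k₁ ≫ tt) = G₀ := by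
    rw [← Category.assoc, hj1, Category.assoc, hrrt, Category.comp_id]
  -- `q := k₁ ≫ tt : E₁ ⟶ EA` is a fibration
  obtain ⟨X₂, x₁, x₂, hPBx, hfx₂⟩ := hS.pullback pEA pE₀ hEA.fib
  have hfx₁ : S.Fib x₁ := fib_pb hS hPBx.symm' h0.fib
  obtain ⟨ν, hν1, hν2⟩ := hPBe.lift' (x₂ ≫ G₀) x₁
    (by rw [Category.assoc, hG₀p, hPBx.1])
  obtain ⟨ψ, hψ1, hψ2⟩ := hPBx.lift' (k₁ ≫ tt) k₂ (by
    simp only [Category.assoc]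
    rw [← hstE, ← hG₀p, reassoc_of% hPBk.1])
  have hPBψ : IsPB k₁ ψ he ν := by
    constructor
    · apply hPBe.hom_ext
      · simp only [Category.assoc]
        rw [he1, hν1, hPBk.1, ← Category.assoc, hψ2]
      · simp only [Category.assoc]
        rw [he2, hν2, hψ1]
    · intro Q a b hab
      obtain ⟨z, hz1, hz2⟩ := hPBk.lift' a (b ≫ x₂) (by
        rw [← he1, ← Category.assoc, hab]
        simp only [Category.assoc]
        rw [hν1])
      have hzψ : z ≫ ψ = b := by
        apply hPBx.hom_ext
        · simp only [Category.assoc]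
          rw [hψ1, ← Category.assoc, hz1, ← he2, ← Category.assoc, hab]
          simp only [Category.assoc]
          rw [hν2]
        · simp only [Category.assoc]
          rw [hψ2, hz2]
      refine ⟨z, ⟨hz1, hzψ⟩, fun z' hz' => ?_⟩
      apply hPBk.hom_ext
      · rw [hz'.1, hz1]
      · rw [← hψ2, ← Category.assoc, hz'.2, ← Category.assoc, hzψ]
  have hfψ : S.Fib ψ := fib_pb hS hPBψ hfe
  have hfq : S.Fib (k₁ ≫ tt) := by
    rw [← hψ1]; exact hS.fib_comp _ _ hfψ hfx₁
  have hfpE₁ : S.Fib ((k₁ ≫ tt) ≫ pEA) := hS.fib_comp _ _ hfq hEA.fib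
  have hcp : k₂ ≫ pE₀ = (k₁ ≫ tt) ≫ pEA := by
    rw [← hG₀p, ← reassoc_of% hPBk.1]
    simp only [Category.assoc]
    rw [hstE]
  have hjp : j ≫ (k₁ ≫ tt) ≫ pEA = pE₀ := by rw [← Category.assoc, hjq, hG₀p]
  -- the pullback `F₁ = f*E₁`
  obtain ⟨F₁, v₂, v₁, hPBF₁', hfv₁⟩ := hS.pullback f ((k₁ ≫ tt) ≫ pEA) hf
  have hF₁ : IsPB v₁ v₂ ((k₁ ≫ tt) ≫ pEA) f := hPBF₁'.symm'
  obtain ⟨fc, hfc₁, hfc₂⟩ := h0.pb.lift' (v₁ ≫ k₂) v₂ (by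
    rw [Category.assoc, hcp, hF₁.1])
  have hE₁ : IsHPi S f (p ≫ pA) ((k₁ ≫ tt) ≫ pEA) v₁ v₂ (fc ≫ ε₀') :=
    hpi_retract hS hg h0' hfpE₁ hfk₂ hek₂ hj2 hjp hcp hF₁ hfc₁ hfc₂
  -- the canonical comparison `μ : F₁ ⟶ FA`
  obtain ⟨μ, hμ1, hμ2⟩ := hEA.pb.lift' (v₁ ≫ (k₁ ≫ tt)) v₂ (by
    rw [Category.assoc, hF₁.1])
  -- second strictification: make the counit square commute strictly
  have hevH : FibHomotopic S pA ((fc ≫ fG₀) ≫ εA) (μ ≫ εA) := by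
    refine ev_homotopic hS hpA hEA.fib hEA.pb hEA.over' hPEA' ?_ (v₁ ≫ k₁) ?_ ?_
    · simp only [Category.assoc]
      rw [hfG₀2, hfc₂, hμ2]
    · simp only [Category.assoc]
      rw [hPBk.1, ← reassoc_of% hfc₁, ← hfG₀1]
    · simp only [Category.assoc]
      rw [hμ1]
  obtain ⟨P₂, r₂, s₂, t₂, hrel₂, H₂, hH₂s, hH₂t⟩ := hevH
  obtain ⟨εB₂, hεB₂p, hhom₂⟩ := master hS hpA hp hrel₂ (fc ≫ ε₀') H₂ (by
    rw [hH₂s]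
    simp only [Category.assoc]
    rw [hε₀'p])
  rw [hH₂t] at hεB₂p
  have hεB₂g : εB₂ ≫ (p ≫ pA) = v₂ := by
    rw [← Category.assoc, hεB₂p, Category.assoc, hEA.over', hμ2]
  have hE₂ : IsHPi S f (p ≫ pA) ((k₁ ≫ tt) ≫ pEA) v₁ v₂ εB₂ :=
    hpi_eps_invar hS hg hE₁ hεB₂g hhom₂
  -- assemble the answer
  refine ⟨E₁, F₁, (k₁ ≫ tt) ≫ pEA, v₁, v₂, εB₂, hE₂, k₁ ≫ tt, hfq, rfl, ?_, ?_⟩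
  · -- (1) strict commutation of the counit square
    intro m hm1 hm2
    have hmμ : m = μ := by
      apply hEA.pb.hom_ext
      · rw [hm1, hμ1]
      · rw [hm2, hμ2]
    rw [hmμ, hεB₂p]
  · -- (2) the square of homotopy hom-sets is a pullback
    intro Cc FC pC _hpC w₁ w₂ hw
    refine ⟨?_, ?_, ?_⟩
    · -- commutativity
      intro MB hMB mB hmB1 hmB2 mA hmA1 hmA2
      have hmA : mA = mB ≫ μ := by
        apply hEA.pb.hom_ext
        · simp only [Category.assoc]
          rw [hmA1, hμ1, reassoc_of% hmB1]
        · rw [hmA2, Category.assoc, hμ2, hmB2]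
      have heq : mA ≫ εA = mB ≫ εB₂ ≫ p := by
        rw [hmA, Category.assoc, ← hεB₂p]
      rw [heq]
      exact fibHomotopic_refl hS hpA _
    · -- injectivity
      intro MB MB' hMB hMB' _hq hyp
      obtain ⟨mB, hmB1, hmB2⟩ := hF₁.lift' (w₁ ≫ MB) w₂
        (by rw [Category.assoc, hMB, hw.1])
      obtain ⟨mB', hmB'1, hmB'2⟩ := hF₁.lift' (w₁ ≫ MB') w₂
        (by rw [Category.assoc, hMB', hw.1])
      have hh := hyp mB mB' hmB1 hmB2 hmB'1 hmB'2
      refine hE₂.unique pC w₁ w₂ hw (mB' ≫ εB₂)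
        (by rw [Category.assoc, hεB₂g, hmB'2]) MB MB' ⟨hMB, ?_⟩ ⟨hMB', ?_⟩
      · intro φ h1 h2
        have : φ = mB := hF₁.hom_ext (by rw [h1, hmB1]) (by rw [h2, hmB2])
        rw [this]
        exact hh
      · intro φ h1 h2
        have : φ = mB' := hF₁.hom_ext (by rw [h1, hmB'1]) (by rw [h2, hmB'2])
        rw [this]
        exact fibHomotopic_refl hS hg _
    · -- surjectivity
      intro MA n hMA hn hyp
      obtain ⟨MB, hMB1, hMB2⟩ := hE₂.lift pC w₁ w₂ hw n hn
      refine ⟨MB, hMB1, ?_, fun mB h1 h2 => hMB2 mB h1 h2⟩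
      obtain ⟨mBc, hmBc1, hmBc2⟩ := hF₁.lift' (w₁ ≫ MB) w₂
        (by rw [Category.assoc, hMB1, hw.1])
      refine hEA.unique pC w₁ w₂ hw (n ≫ p)
        (by rw [Category.assoc, hn]) (MB ≫ (k₁ ≫ tt)) MA
        ⟨by rw [Category.assoc, hMB1], ?_⟩ ⟨hMA, fun mA h1 h2 => hyp mA h1 h2⟩
      intro φ h1 h2
      have hφ : φ = mBc ≫ μ := by
        apply hEA.pb.hom_ext
        · simp only [Category.assoc]
          rw [h1, hμ1, reassoc_of% hmBc1]
        · rw [h2, Category.assoc, hμ2, hmBc2]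
      have hε := hMB2 mBc hmBc1 hmBc2
      have := hε.postcomp hS hpA p (𝟙 Y) (by rw [Category.comp_id])
      rw [hφ, Category.assoc, ← hεB₂p, ← Category.assoc]
      exact this

end EffPaper
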